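/- Let h, h_1, h_2, h_3, h_{12}, h_{13}, h_{23}, h_{123}, h^x, h^y, h^z be complex numbers with h ≠ 0, h^x ≠ 0, h^y ≠ 0, h^z ≠ 0. Define the 3×3 matrix M with entries M^{11} = h_1/h, M^{22} = h_2/h, M^{33} = h_3/h, M^{23} = −h^x/h, M^{31} = −h^y/h, M^{12} = −h^z/h, M^{32} = −(h_2h_3 + h·h_{23})/(h·h^x), M^{13} = −(h_1h_3 + h·h_{13})/(h·h^y), M^{21} = −(h_1h_2 + h·h_{12})/(h·h^z). Then the fourth hexahedron recurrence relation h_{123}·h²·h^xh^yh^z = (h^xh^yh^z)² + h^xh^yh^z(2h_1h_2h_3 + h·h_1h_{23} + h·h_2h_{13} + h·h_3h_{12}) + (h_1h_2 + h·h_{12})(h_1h_3 + h·h_{13})(h_2h_3 + h·h_{23}) holds if and only if h_{123} = −det(M)·h. -/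

import Mathlib

/-- The fourth hexahedron recurrence relation is equivalent to
`h₁₂₃ = −det(M)·h`, where `M` is the 3×3 matrix obtained from the hexahedron
data by the change of variables `M^{ii} = hᵢ/h`, `M^{23} = −h^x/h`,
`M^{31} = −h^y/h`, `M^{12} = −h^z/h`, `M^{32} = −Δ^x/(hh^x)`,
`M^{13} = −Δ^y/(hh^y)`, `M^{21} = −Δ^z/(hh^z)`. -/
theorem hexahedron_fourth_relation_iff_det
    (h h1 h2 h3 h12 h13 h23 h123 hx hy hz : ℂ)
    (hh : h ≠ 0) (hhx : hx ≠ 0) (hhy : hy ≠ 0) (hhz : hz ≠ 0) :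
    h123 * h ^ 2 * (hx * hy * hz) =
        (hx * hy * hz) ^ 2
          + hx * hy * hz *
              (2 * h1 * h2 * h3 + h * h1 * h23 + h * h2 * h13 + h * h3 * h12)
          + (h1 * h2 + h * h12) * (h1 * h3 + h * h13) * (h2 * h3 + h * h23) ↔
      h123 =
        -Matrix.det
            !![h1 / h, -hz / h, -(h1 * h3 + h * h13) / (h * hy);
               -(h1 * h2 + h * h12) / (h * hz), h2 / h, -hx / h;
               -hy / h, -(h2 * h3 + h * h23) / (h * hx), h3 / h] * h := by
  have hne : h ^ 2 * (hx * hy * hz) ≠ 0 :=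
    mul_ne_zero (pow_ne_zero _ hh) (mul_ne_zero (mul_ne_zero hhx hhy) hhz)
  have key :
      -Matrix.det
            !![h1 / h, -hz / h, -(h1 * h3 + h * h13) / (h * hy);
               -(h1 * h2 + h * h12) / (h * hz), h2 / h, -hx / h;
               -hy / h, -(h2 * h3 + h * h23) / (h * hx), h3 / h] * h *
          (h ^ 2 * (hx * hy * hz)) =
        (hx * hy * hz) ^ 2
          + hx * hy * hz *
              (2 * h1 * h2 * h3 + h * h1 * h23 + h * h2 * h13 + h * h3 * h12)
          + (h1 * h2 + h * h12) * (h1 * h3 + h * h13) * (h2 * h3 + h * h23) := by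
    norm_num [Matrix.det_fin_three, Matrix.cons_val_two, Matrix.cons_val_one, Matrix.head_cons, Matrix.tail_cons]
    linear_combination
      (hx^2*hy^2*hz^2 + (-1)*h1*h2*h3*hx*hy*hz + h1*h2*h3*hx*hy*hz^2*hz⁻¹ + h1*h2*h3*hx*hy^2*hz*hy⁻¹ + h1*h2*h3*hx^2*hy*hz*hx⁻¹ + h1^2*h2^2*h3^2*hx*hy*hz*hx⁻¹*hy⁻¹*hz⁻¹ + h*hx^2*hy^2*hz^2*h⁻¹ + h*h3*h12*hx*hy*hz^2*hz⁻¹ + h*h2*h13*hx*hy^2*hz*hy⁻¹ + h*h1*h23*hx^2*hy*hz*hx⁻¹ + (-1)*h*h1*h2*h3*hx*hy*hz*h⁻¹ + h*h1*h2*h3*hx*hy*hz^2*h⁻¹*hz⁻¹ + h*h1*h2*h3*hx*hy^2*hz*h⁻¹*hy⁻¹ + h*h1*h2*h3*hx^2*hy*hz*h⁻¹*hx⁻¹ + h*h1*h2*h3^2*h12*hx*hy*hz*hx⁻¹*hy⁻¹*hz⁻¹ + h*h1*h2^2*h3*h13*hx*hy*hz*hx⁻¹*hy⁻¹*hz⁻¹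 + h*h1^2*h2*h3*h23*hx*hy*hz*hx⁻¹*hy⁻¹*hz⁻¹ + h*h1^2*h2^2*h3^2*hx*hy*hz*h⁻¹*hx⁻¹*hy⁻¹*hz⁻¹ + h^2*hx^2*hy^2*hz^2*h⁻¹^2 + h^2*h3*h12*hx*hy*hz^2*h⁻¹*hz⁻¹ + h^2*h2*h13*hx*hy^2*hz*h⁻¹*hy⁻¹ + h^2*h2*h3*h12*h13*hx*hy*hz*hx⁻¹*hy⁻¹*hz⁻¹ + h^2*h1*h23*hx^2*hy*hz*h⁻¹*hx⁻¹ + h^2*h1*h3*h12*h23*hx*hy*hz*hx⁻¹*hy⁻¹*hz⁻¹ + h^2*h1*h2*h13*h23*hx*hy*hz*hx⁻¹*hy⁻¹*hz⁻¹ + (-1)*h^2*h1*h2*h3*hx*hy*hz*h⁻¹^2 + h^2*h1*h2*h3*hx*hy*hz^2*h⁻¹^2*hz⁻¹ + h^2*h1*h2*h3*hx*hy^2*hz*h⁻¹^2*hy⁻¹ + h^2*h1*h2*h3*hx^2*hy*hz*h⁻¹^2*hx⁻¹ + h^2*h1*h2*h3^2*h12*hx*hy*hz*h⁻¹*hx⁻¹*hy⁻¹*hz⁻¹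 + h^2*h1*h2^2*h3*h13*hx*hy*hz*h⁻¹*hx⁻¹*hy⁻¹*hz⁻¹ + h^2*h1^2*h2*h3*h23*hx*hy*hz*h⁻¹*hx⁻¹*hy⁻¹*hz⁻¹ + h^2*h1^2*h2^2*h3^2*hx*hy*hz*h⁻¹^2*hx⁻¹*hy⁻¹*hz⁻¹ + h^3*h12*h13*h23*hx*hy*hz*hx⁻¹*hy⁻¹*hz⁻¹ + h^3*h3*h12*hx*hy*hz^2*h⁻¹^2*hz⁻¹ + h^3*h2*h13*hx*hy^2*hz*h⁻¹^2*hy⁻¹ + h^3*h2*h3*h12*h13*hx*hy*hz*h⁻¹*hx⁻¹*hy⁻¹*hz⁻¹ + h^3*h1*h23*hx^2*hy*hz*h⁻¹^2*hx⁻¹ + h^3*h1*h3*h12*h23*hx*hy*hz*h⁻¹*hx⁻¹*hy⁻¹*hz⁻¹ + h^3*h1*h2*h13*h23*hx*hy*hz*h⁻¹*hx⁻¹*hy⁻¹*hz⁻¹ + h^3*h1*h2*h3^2*h12*hx*hy*hz*h⁻¹^2*hx⁻¹*hy⁻¹*hz⁻¹ + h^3*h1*h2^2*h3*h13*hx*hy*hz*h⁻¹^2*hx⁻¹*hy⁻¹*hz⁻¹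 + h^3*h1^2*h2*h3*h23*hx*hy*hz*h⁻¹^2*hx⁻¹*hy⁻¹*hz⁻¹ + h^4*h12*h13*h23*hx*hy*hz*h⁻¹*hx⁻¹*hy⁻¹*hz⁻¹ + h^4*h2*h3*h12*h13*hx*hy*hz*h⁻¹^2*hx⁻¹*hy⁻¹*hz⁻¹ + h^4*h1*h3*h12*h23*hx*hy*hz*h⁻¹^2*hx⁻¹*hy⁻¹*hz⁻¹ + h^4*h1*h2*h13*h23*hx*hy*hz*h⁻¹^2*hx⁻¹*hy⁻¹*hz⁻¹ + h^5*h12*h13*h23*hx*hy*hz*h⁻¹^2*hx⁻¹*hy⁻¹*hz⁻¹) * (mul_inv_cancel₀ hh) +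
      (h1*h2*h3*hx*hy*hz + h1^2*h2^2*h3^2*hy*hz*hy⁻¹*hz⁻¹ + h*h1*h23*hx*hy*hz + h*h1*h2*h3^2*h12*hy*hz*hy⁻¹*hz⁻¹ + h*h1*h2^2*h3*h13*hy*hz*hy⁻¹*hz⁻¹ + h*h1^2*h2*h3*h23*hy*hz*hy⁻¹*hz⁻¹ + h^2*h2*h3*h12*h13*hy*hz*hy⁻¹*hz⁻¹ + h^2*h1*h3*h12*h23*hy*hz*hy⁻¹*hz⁻¹ + h^2*h1*h2*h13*h23*hy*hz*hy⁻¹*hz⁻¹ + h^3*h12*h13*h23*hy*hz*hy⁻¹*hz⁻¹) * (mul_inv_cancel₀ hhx) +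
      (h1*h2*h3*hx*hy*hz + h1^2*h2^2*h3^2*hz*hz⁻¹ + h*h2*h13*hx*hy*hz + h*h1*h2*h3^2*h12*hz*hz⁻¹ + h*h1*h2^2*h3*h13*hz*hz⁻¹ + h*h1^2*h2*h3*h23*hz*hz⁻¹ + h^2*h2*h3*h12*h13*hz*hz⁻¹ + h^2*h1*h3*h12*h23*hz*hz⁻¹ + h^2*h1*h2*h13*h23*hz*hz⁻¹ + h^3*h12*h13*h23*hz*hz⁻¹) * (mul_inv_cancel₀ hhy) +
      (h1*h2*h3*hx*hy*hz + h1^2*h2^2*h3^2 + h*h3*h12*hx*hy*hz + h*h1*h2*h3^2*h12 + h*h1*h2^2*h3*h13 + h*h1^2*h2*h3*h23 + h^2*h2*h3*h12*h13 + h^2*h1*h3*h12*h23 + h^2*h1*h2*h13*h23 + h^3*h12*h13*h23) * (mul_inv_cancel₀ hhz)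
  constructor
  · intro H
    have h2' : h123 * (h ^ 2 * (hx * hy * hz)) =
        -Matrix.det
            !![h1 / h, -hz / h, -(h1 * h3 + h * h13) / (h * hy);
               -(h1 * h2 + h * h12) / (h * hz), h2 / h, -hx / h;
               -hy / h, -(h2 * h3 + h * h23) / (h * hx), h3 / h] * h *
          (h ^ 2 * (hx * hy * hz)) := by rw [key]; linear_combination H
    exact mul_right_cancel₀ hne h2'
  · intro H
    rw [H]
    linear_combination key
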